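/- Let X be a finite nonempty type, let qᶻ be a probability mass function on X with qᶻ(x) > 0 for all x, and let r, r' : X → ℝ be strictly positive fitness functions. If the selection map outputs agree, f(qᶻ, r) = f(qᶻ, r'), then r and r' are proportional: there exists c > 0 such that r(x) = c·r'(x) for all x ∈ X. Consequently, if in addition r(x₀) = r'(x₀) = 1 at some reference point x₀, then r = r'. -/

import Mathlib

/-- The selection map: `f(q,r)(x) = r(x)·q(x) / Σ_{x'} r(x')·q(x')`. -/
noncomputable def select {X : Type*} [Fintype X] (q r : X → ℝ) : X → ℝ :=
  fun x => r x * q x / ∑ x' : X, r x' * q x'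

/-- if two strictly positive fitness functions produce the same selected
distribution from an everywhere-positive pre-selection distribution, they are
proportional; with the normalization `r(x₀) = r'(x₀) = 1` they are equal. -/
theorem select_fitness_unique {X : Type*} [Fintype X] [Nonempty X]
    (qz r r' : X → ℝ)
    (hqz0 : ∀ x, 0 < qz x) (hqz1 : ∑ x : X, qz x = 1)
    (hr : ∀ x, 0 < r x) (hr' : ∀ x, 0 < r' x)
    (heq : select qz r = select qz r') :
    (∃ c : ℝ, 0 < c ∧ ∀ x, r x = c * r' x) ∧
    (∀ x₀ : X, r x₀ = 1 → r' x₀ = 1 → r = r') := by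
  have hS : 0 < ∑ x' : X, r x' * qz x' :=
    Finset.sum_pos (fun x _ => mul_pos (hr x) (hqz0 x)) Finset.univ_nonempty
  have hS' : 0 < ∑ x' : X, r' x' * qz x' :=
    Finset.sum_pos (fun x _ => mul_pos (hr' x) (hqz0 x)) Finset.univ_nonempty
  set S := ∑ x' : X, r x' * qz x'
  set S' := ∑ x' : X, r' x' * qz x'
  have key : ∀ x, r x = (S / S') * r' x := by
    intro x
    have h := congrFun heq x
    simp only [select] at h
    have hratio : r x * qz x * S' = r' x * qz x * S := by
      have h := (div_eq_div_iff hS.ne' hS'.ne').mp h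
      linarith [h]
    have hq := (hqz0 x).ne'
    have : r x * S' = r' x * S := by
      have h2 : (r x * S') * qz x = (r' x * S) * qz x := by ring_nf; ring_nf at hratio; linarith
      exact mul_right_cancel₀ hq h2
    field_simp
    linarith [this]
  have hprop : ∃ c : ℝ, 0 < c ∧ ∀ x, r x = c * r' x :=
    ⟨S / S', div_pos hS hS', key⟩
  refine ⟨hprop, fun x₀ h1 h2 => ?_⟩
  have hc : S / S' = 1 := by
    have := key x₀; rw [h1, h2] at this; linarith [this]
  funext x
  have := key x; rw [hc, one_mul] at this; exact this
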